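/- Every element w of U_X can be expressed uniquely as a concatenation w = w₁w₂⋯wₘ of irreducible elements w₁, …, wₘ of U_X, where an element of U_X is called irreducible if it is not the concatenation of two elements of U_X. -/

import Mathlib

/-- The opening symbol λ. -/
def lam (X : Type*) : X ⊕ Bool := Sum.inr false

/-- The closing symbol ρ. -/
def rho (X : Type*) : X ⊕ Bool := Sum.inr true

/-- For a word `u`, the word `u⁻¹ = λ u ρ`. -/
def winv {X : Type*} (u : List (X ⊕ Bool)) : List (X ⊕ Bool) :=
  [lam X] ++ u ++ [rho X]

/-- `U_X`: the least subset of `Y⁺` containing the one-letter words from `X`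
and closed under concatenation and `u ↦ u⁻¹`. -/
inductive UX (X : Type*) : List (X ⊕ Bool) → Prop
  | var (x : X) : UX X [Sum.inl x]
  | mul {u v : List (X ⊕ Bool)} : UX X u → UX X v → UX X (u ++ v)
  | inv {u : List (X ⊕ Bool)} : UX X u → UX X (winv u)

/-- An element of `U_X` is irreducible if it is not the concatenation
of two elements of `U_X`. -/
def IrreducibleWord {X : Type*} (w : List (X ⊕ Bool)) : Prop :=
  UX X w ∧ ¬ ∃ u v : List (X ⊕ Bool), UX X u ∧ UX X v ∧ w = u ++ v

/- Auxiliary development -/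

def wt {X : Type*} : X ⊕ Bool → ℤ := Sum.elim (fun _ => 0) (fun b => if b then -1 else 1)

def bal {X : Type*} (w : List (X ⊕ Bool)) : ℤ := (w.map wt).sum

lemma bal_append {X : Type*} (u v : List (X ⊕ Bool)) : bal (u ++ v) = bal u + bal v := by
  simp [bal]

lemma UX.ne_nil {X : Type*} {w : List (X ⊕ Bool)} (h : UX X w) : w ≠ [] := by
  induction h <;> simp_all [winv]

lemma UX.bal_zero {X : Type*} {w : List (X ⊕ Bool)} (h : UX X w) : bal w = 0 := by
  induction h with
  | var x => simp [bal, wt]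
  | mul hu hv ihu ihv => rw [bal_append]; omega
  | inv hu ih =>
      simp only [winv, bal_append, ih]
      simp [bal, wt, lam, rho]

lemma UX.prefix_bal {X : Type*} {w : List (X ⊕ Bool)} (h : UX X w) :
    ∀ p q, w = p ++ q → 0 ≤ bal p := by
  induction h with
  | var x =>
      rintro (_ | ⟨a, p⟩) q hpq
      · simp [bal]
      · simp only [List.cons_append, List.cons.injEq] at hpq
        obtain ⟨rfl, h2⟩ := hpq
        have : p = [] := by
          cases p with
          | nil => rfl
          | cons b t => simp at h2
        subst this
        simp [bal, wt]
  | mul hu hv ihu ihv =>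
      intro p q hpq
      rcases List.append_eq_append_iff.mp hpq.symm with ⟨a, ha1, ha2⟩ | ⟨c, hc1, hc2⟩
      · exact ihu p a ha1
      · subst hc1
        rw [bal_append, hu.bal_zero, zero_add]
        exact ihv c q hc2
  | inv hu ih =>
      rintro (_ | ⟨a, p⟩) q hpq
      · simp [bal]
      · simp only [winv, List.singleton_append, List.cons_append, List.cons.injEq] at hpq
        obtain ⟨rfl, h2⟩ := hpq
        -- h2 : u ++ [rho X] = p ++ q
        have hp : -1 ≤ bal p := by
          rcases List.append_eq_append_iff.mp h2 with ⟨a, ha1, ha2⟩ | ⟨c, hc1, hc2⟩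
          · have ha : a = [] ∨ a = [rho X] := by
              cases a with
              | nil => left; rfl
              | cons b t =>
                  right
                  simp only [List.cons_append, List.cons.injEq] at ha2
                  obtain ⟨rfl, h3⟩ := ha2
                  have : t = [] := by cases t with | nil => rfl | cons c s => simp at h3
                  subst this; rfl
            subst ha1
            have h0 := hu.bal_zero
            have hr : bal [rho X] = -1 := by simp [bal, wt, rho]
            rcases ha with rfl | rfl
            · simp only [List.nil_append, List.append_nil]; omega
            · simp only [List.nil_append, bal_append]; omega
          · have := ih p c hc1
            omega
        have : bal (lam X :: p) = 1 + bal p := by simp [bal, wt, lam]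
        omega

lemma irr_var {X : Type*} (x : X) : IrreducibleWord ([Sum.inl x] : List (X ⊕ Bool)) := by
  refine ⟨UX.var x, ?_⟩
  rintro ⟨u, v, hu, hv, h⟩
  have h1 : 1 ≤ u.length := List.length_pos_iff.mpr hu.ne_nil
  have h2 : 1 ≤ v.length := List.length_pos_iff.mpr hv.ne_nil
  have := congrArg List.length h
  simp only [List.length_append, List.length_singleton] at this
  omega

lemma irr_inv {X : Type*} {u : List (X ⊕ Bool)} (hu : UX X u) : IrreducibleWord (winv u) := by
  refine ⟨UX.inv hu, ?_⟩
  rintro ⟨v₁, v₂, h1, h2, h⟩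
  obtain ⟨a, p, rfl⟩ : ∃ a p, v₁ = a :: p := by
    cases v₁ with
    | nil => exact absurd rfl h1.ne_nil
    | cons a p => exact ⟨a, p, rfl⟩
  simp only [winv, List.singleton_append, List.cons_append, List.append_assoc,
    List.cons.injEq] at h
  obtain ⟨rfl, h3⟩ := h
  simp only [List.nil_append] at h3
  have hp : 0 ≤ bal p := by
    rcases List.append_eq_append_iff.mp h3 with ⟨a', ha1, ha2⟩ | ⟨c, hc1, hc2⟩
    · have : a' = [] := by
        cases a' with
        | nil => rfl
        | cons b t =>
            exfalso
            simp only [List.cons_append, List.cons.injEq] at ha2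
            obtain ⟨-, h4⟩ := ha2
            rcases List.append_eq_nil_iff.mp h4.symm with ⟨-, h5⟩
            exact h2.ne_nil h5
      subst this
      rw [List.append_nil] at ha1
      rw [ha1, hu.bal_zero]
    · exact hu.prefix_bal p c hc1
  have hb1 : bal (lam X :: p) = 0 := h1.bal_zero
  have hb2 : bal (lam X :: p) = 1 + bal p := by simp [bal, wt, lam]
  omega

lemma irr_cases {X : Type*} {w : List (X ⊕ Bool)} (h : IrreducibleWord w) :
    (∃ x : X, w = [Sum.inl x]) ∨ (∃ u, UX X u ∧ w = winv u) := by
  obtain ⟨hw, hn⟩ := h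
  cases hw with
  | var x => exact Or.inl ⟨x, rfl⟩
  | mul hu hv => exact absurd ⟨_, _, hu, hv, rfl⟩ hn
  | inv hu => exact Or.inr ⟨_, hu, rfl⟩

lemma no_inner {X : Type*} {u u' t : List (X ⊕ Bool)} (hu : UX X u) (hu' : UX X u')
    (h : u' = u ++ rho X :: t) : False := by
  have h1 := hu'.prefix_bal (u ++ [rho X]) t (by rw [h]; simp)
  have h0 := hu.bal_zero
  have h2 : bal (u ++ [rho X]) = bal u + (-1) := by
    rw [bal_append]; simp [bal, wt, rho]
  omega

lemma winv_head {X : Type*} {u u' r r' : List (X ⊕ Bool)} (hu : UX X u) (hu' : UX X u')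
    (h : winv u ++ r = winv u' ++ r') : u = u' ∧ r = r' := by
  simp only [winv, List.singleton_append, List.cons_append, List.append_assoc,
    List.nil_append, List.cons.injEq] at h
  obtain ⟨-, h⟩ := h
  rcases List.append_eq_append_iff.mp h with ⟨a, ha1, ha2⟩ | ⟨c, hc1, hc2⟩
  · cases a with
    | nil =>
        rw [List.append_nil] at ha1
        simp only [List.nil_append, List.cons.injEq] at ha2
        exact ⟨ha1.symm, ha2.2⟩
    | cons b t =>
        exfalso
        simp only [List.cons_append, List.cons.injEq] at ha2
        obtain ⟨rfl, -⟩ := ha2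
        exact no_inner hu hu' ha1
  · cases c with
    | nil =>
        rw [List.append_nil] at hc1
        simp only [List.nil_append, List.cons.injEq] at hc2
        exact ⟨hc1, hc2.2.symm⟩
    | cons b t =>
        exfalso
        simp only [List.cons_append, List.cons.injEq] at hc2
        obtain ⟨rfl, -⟩ := hc2
        exact no_inner hu' hu hc1

lemma uniq_fact {X : Type*} : ∀ (l l' : List (List (X ⊕ Bool))),
    (∀ p ∈ l, IrreducibleWord p) → (∀ p ∈ l', IrreducibleWord p) →
    l.flatten = l'.flatten → l = l' := by
  intro l
  induction l with
  | nil =>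
      intro l' _ h' hf
      cases l' with
      | nil => rfl
      | cons a t =>
          exfalso
          have ha : a ≠ [] := (h' a (by simp)).1.ne_nil
          simp only [List.flatten_nil, List.flatten_cons] at hf
          rcases List.append_eq_nil_iff.mp hf.symm with ⟨h5, -⟩
          exact ha h5
  | cons a t ih =>
      intro l' h h' hf
      cases l' with
      | nil =>
          exfalso
          have ha : a ≠ [] := (h a (by simp)).1.ne_nil
          simp only [List.flatten_nil, List.flatten_cons] at hf
          rcases List.append_eq_nil_iff.mp hf with ⟨h5, -⟩
          exact ha h5
      | cons a' t' =>
          have hia := h a (by simp)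
          have hia' := h' a' (by simp)
          simp only [List.flatten_cons] at hf
          have key : a = a' ∧ t.flatten = t'.flatten := by
            rcases irr_cases hia with ⟨x, rfl⟩ | ⟨u, hu, rfl⟩ <;>
              rcases irr_cases hia' with ⟨x', rfl⟩ | ⟨u', hu', rfl⟩
            · simp only [List.singleton_append, List.cons.injEq, Sum.inl.injEq] at hf
              exact ⟨by rw [hf.1], hf.2⟩
            · exfalso
              simp only [winv, lam, List.singleton_append, List.cons_append,
                List.append_assoc, List.cons.injEq] at hf
              exact Sum.inl_ne_inr hf.1
            · exfalso
              simp only [winv, lam, List.singleton_append, List.cons_append,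
                List.append_assoc, List.cons.injEq] at hf
              exact Sum.inr_ne_inl hf.1
            · obtain ⟨h1, h2⟩ := winv_head hu hu' hf
              exact ⟨by rw [h1], h2⟩
          obtain ⟨rfl, hft⟩ := key
          have := ih t' (fun p hp => h p (by simp [hp])) (fun p hp => h' p (by simp [hp])) hft
          rw [this]

lemma exists_fact {X : Type*} {w : List (X ⊕ Bool)} (hw : UX X w) :
    ∃ l : List (List (X ⊕ Bool)), l.flatten = w ∧ ∀ p ∈ l, IrreducibleWord p := by
  induction hw with
  | var x => exact ⟨[[Sum.inl x]], by simp, by rintro p hp; simp at hp; subst hp; exact irr_var x⟩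
  | mul hu hv ihu ihv =>
      obtain ⟨lu, hlu1, hlu2⟩ := ihu
      obtain ⟨lv, hlv1, hlv2⟩ := ihv
      refine ⟨lu ++ lv, by simp [hlu1, hlv1], ?_⟩
      intro p hp
      rcases List.mem_append.mp hp with h | h
      · exact hlu2 p h
      · exact hlv2 p h
  | inv hu ih =>
      rename_i u
      refine ⟨[winv u], by simp, ?_⟩
      rintro p hp
      simp only [List.mem_singleton] at hp
      subst hp
      exact irr_inv hu

theorem stmt2 {X : Type*} {w : List (X ⊕ Bool)} (hw : UX X w) :
    ∃! l : List (List (X ⊕ Bool)),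
      l.flatten = w ∧ ∀ p ∈ l, IrreducibleWord p := by
  obtain ⟨l, h1, h2⟩ := exists_fact hw
  exact ⟨l, ⟨h1, h2⟩, fun l' ⟨h1', h2'⟩ => uniq_fact l' l h2' h2 (by rw [h1', h1])⟩
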